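/- For m ≥ 2, the digraph on m + 1 vertices with an edge from i to j iff i < m or j < m (i.e., adjacency matrix with an (m−1)×(m−1) all-ones block bordered by two full rows and columns except a 2×2 zero block in the corner) has spectral radius (m − 1 + √(m² + 6m − 7))/2. -/

import Mathlib

open Matrix Polynomial

private lemma eval_charpoly_det {n : Type*} [Fintype n] [DecidableEq n]
    (M : Matrix n n ℂ) (z : ℂ) :
    M.charpoly.eval z = (z • (1 : Matrix n n ℂ) - M).det := by
  rw [Matrix.charpoly, ← Polynomial.coe_evalRingHom, RingHom.map_det]
  congr 1
  ext i j
  by_cases h : i = j <;>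
    simp [charmatrix_apply, h, Matrix.one_apply, Matrix.smul_apply]

private lemma sum_ite_fin (m : ℕ) (hm : 2 ≤ m) (a b : ℂ) :
    ∑ j : Fin (m + 1), (if j.1 + 1 < m then a else b) = ((m : ℂ) - 1) * a + 2 * b := by
  rw [Fin.sum_univ_eq_sum_range (fun j => if j + 1 < m then a else b), Finset.sum_ite]
  have h1 : (Finset.range (m + 1)).filter (fun j => j + 1 < m) = Finset.range (m - 1) := by
    ext x; simp; omega
  have h2 : (Finset.range (m + 1)).filter (fun j => ¬ j + 1 < m) = {m - 1, m} := by
    ext x; simp; omega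
  have hne : m - 1 ≠ m := by omega
  rw [h1, h2, Finset.sum_const, Finset.card_range, Finset.sum_pair hne]
  have hcast : ((m - 1 : ℕ) : ℂ) = (m : ℂ) - 1 := by
    rw [Nat.cast_sub (by omega : 1 ≤ m), Nat.cast_one]
  rw [nsmul_eq_mul, hcast]; ring

/-- For `m ≥ 2`, the digraph on `m + 1` vertices `{1,…,m+1}` with an edge `i → j` iff
`i < m` or `j < m` (here 0-indexed: `i + 1 < m ∨ j + 1 < m`) has spectral radius
`(m − 1 + √(m² + 6m − 7))/2`. -/
theorem spectralRadius_friedland_extremal (m : ℕ) (hm : 2 ≤ m)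
    (M : Matrix (Fin (m + 1)) (Fin (m + 1)) ℂ)
    (hM : ∀ i j, M i j = if i.1 + 1 < m ∨ j.1 + 1 < m then 1 else 0) :
    IsGreatest {r : ℝ | ∃ z : ℂ, M.charpoly.IsRoot z ∧ r = ‖z‖}
      (((m : ℝ) - 1 + Real.sqrt ((m : ℝ) ^ 2 + 6 * m - 7)) / 2) := by
  have hm1 : (1 : ℝ) ≤ (m : ℝ) - 1 := by
    have : (2 : ℝ) ≤ (m : ℝ) := by exact_mod_cast hm
    linarith
  set s : ℝ := Real.sqrt ((m : ℝ) ^ 2 + 6 * m - 7) with hsdef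
  have hDnn : (0 : ℝ) ≤ (m : ℝ) ^ 2 + 6 * m - 7 := by nlinarith
  have hs : s ^ 2 = (m : ℝ) ^ 2 + 6 * m - 7 := Real.sq_sqrt hDnn
  have hsnn : 0 ≤ s := Real.sqrt_nonneg _
  have hsge : (m : ℝ) - 1 ≤ s := by
    nlinarith [hs, hsnn]
  set lp : ℝ := ((m : ℝ) - 1 + s) / 2 with hlp
  set lm : ℝ := ((m : ℝ) - 1 - s) / 2 with hlm
  have hlppos : 0 < lp := by rw [hlp]; linarith
  have hsumR : lp + lm = (m : ℝ) - 1 := by rw [hlp, hlm]; ring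
  have hprodR : lp * lm = -2 * ((m : ℝ) - 1) := by
    rw [hlp, hlm]; linear_combination (-(1 : ℝ)/4) * hs
  have h1c : (lp : ℂ) + (lm : ℂ) = (m : ℂ) - 1 := by exact_mod_cast hsumR
  have h2c : (lp : ℂ) * (lm : ℂ) = -2 * ((m : ℂ) - 1) := by exact_mod_cast hprodR
  have hquad : ∀ z : ℂ, z ^ 2 - ((m : ℂ) - 1) * z - 2 * ((m : ℂ) - 1)
      = (z - lp) * (z - lm) := by
    intro z; linear_combination z * h1c - h2c
  have hlpquad : (lp : ℂ) ^ 2 = ((m : ℂ) - 1) * lp + 2 * ((m : ℂ) - 1) := by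
    have : (lp : ℂ) ^ 2 - ((m : ℂ) - 1) * lp - 2 * ((m : ℂ) - 1) = 0 := by
      rw [hquad]; ring
    linear_combination this
  -- mulVec computation
  have hmv : ∀ (v : Fin (m + 1) → ℂ) (i : Fin (m + 1)),
      M.mulVec v i = if i.1 + 1 < m then (∑ j, v j)
        else (∑ j : Fin (m + 1), if j.1 + 1 < m then v j else 0) := by
    intro v i
    simp only [Matrix.mulVec, dotProduct, hM]
    by_cases hi : i.1 + 1 < m
    · simp only [hi, true_or, if_true]
      exact Finset.sum_congr rfl fun j _ => by rw [one_mul]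
    · simp only [hi, false_or, if_false]
      refine Finset.sum_congr rfl fun j _ => ?_
      by_cases hj : j.1 + 1 < m <;> simp [hj]
  constructor
  · -- membership
    refine ⟨(lp : ℂ), ?_, ?_⟩
    · rw [Polynomial.IsRoot, eval_charpoly_det]
      rw [← Matrix.exists_mulVec_eq_zero_iff]
      refine ⟨fun j => if j.1 + 1 < m then (lp : ℂ) else ((m : ℂ) - 1), ?_, ?_⟩
      · intro h
        have := congrFun h ⟨m, by omega⟩
        simp only [Pi.zero_apply] at this
        rw [if_neg (by omega)] at this
        have hmne : (m : ℂ) - 1 ≠ 0 := by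
          intro h'
          have : (m : ℂ) = 1 := by linear_combination h'
          have : (m : ℝ) = 1 := by exact_mod_cast this
          linarith
        exact hmne this
      · funext i
        rw [Matrix.sub_mulVec, Matrix.smul_mulVec, Matrix.one_mulVec]
        simp only [Pi.sub_apply, Pi.smul_apply, smul_eq_mul, Pi.zero_apply]
        rw [hmv]
        have hsum1 : (∑ j : Fin (m + 1), if j.1 + 1 < m then (lp : ℂ) else ((m : ℂ) - 1))
            = ((m : ℂ) - 1) * lp + 2 * ((m : ℂ) - 1) := sum_ite_fin m hm _ _
        have hsum2 : (∑ j : Fin (m + 1),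
            if j.1 + 1 < m then (if j.1 + 1 < m then (lp : ℂ) else ((m : ℂ) - 1)) else 0)
            = ((m : ℂ) - 1) * lp := by
          rw [show (∑ j : Fin (m + 1),
              if j.1 + 1 < m then (if j.1 + 1 < m then (lp : ℂ) else ((m : ℂ) - 1)) else 0)
              = ∑ j : Fin (m + 1), if j.1 + 1 < m then (lp : ℂ) else 0 from
            Finset.sum_congr rfl fun j _ => by by_cases hj : j.1 + 1 < m <;> simp [hj]]
          rw [sum_ite_fin m hm]; ring
        by_cases hi : i.1 + 1 < m
        · rw [if_pos hi, if_pos hi, hsum1, ← hlpquad]; ring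
        · rw [if_neg hi, if_neg hi, hsum2]; ring
    · rw [Complex.norm_real, Real.norm_eq_abs, abs_of_nonneg hlppos.le]
  · -- upper bound
    rintro r ⟨z, hz, rfl⟩
    have hdet : (z • (1 : Matrix (Fin (m + 1)) (Fin (m + 1)) ℂ) - M).det = 0 := by
      rw [← eval_charpoly_det]; exact hz
    obtain ⟨v, hv0, hv⟩ := Matrix.exists_mulVec_eq_zero_iff.mpr hdet
    have heig : ∀ i, z * v i = M.mulVec v i := by
      intro i
      have := congrFun hv i
      rw [Matrix.sub_mulVec, Matrix.smul_mulVec, Matrix.one_mulVec] at this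
      simpa [sub_eq_zero] using this
    set T : ℂ := ∑ j, v j with hT
    set S : ℂ := ∑ j : Fin (m + 1), if j.1 + 1 < m then v j else 0 with hS
    have h1 : ∀ i : Fin (m + 1), z * v i = if i.1 + 1 < m then T else S := by
      intro i; rw [heig, hmv]
    have hTeq : z * T = ((m : ℂ) - 1) * T + 2 * S := by
      have : z * T = ∑ j : Fin (m + 1), if j.1 + 1 < m then T else S := by
        rw [hT, Finset.mul_sum]
        exact Finset.sum_congr rfl fun j _ => h1 j
      rw [this, sum_ite_fin m hm]
    have hSeq : z * S = ((m : ℂ) - 1) * T := by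
      have : z * S = ∑ j : Fin (m + 1), if j.1 + 1 < m then T else 0 := by
        rw [hS, Finset.mul_sum]
        refine Finset.sum_congr rfl fun j _ => ?_
        by_cases hj : j.1 + 1 < m
        · simp only [hj, if_true]; rw [h1 j, if_pos hj]
        · simp [hj]
      rw [this, sum_ite_fin m hm]; ring
    by_cases hz0 : z = 0
    · rw [hz0]; simp only [norm_zero]; positivity
    by_cases hT0 : T = 0
    · exfalso
      have hS0 : S = 0 := by
        have := hSeq; rw [hT0, mul_zero] at this
        rcases mul_eq_zero.mp this with h | h
        · exact absurd h hz0
        · exact h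
      apply hv0
      funext i
      have := h1 i
      rw [hT0, hS0, ite_self] at this
      show v i = 0
      rcases mul_eq_zero.mp this with h | h
      · exact absurd h hz0
      · exact h
    have key : z ^ 2 = ((m : ℂ) - 1) * z + 2 * ((m : ℂ) - 1) := by
      have h : z ^ 2 * T = (((m : ℂ) - 1) * z + 2 * ((m : ℂ) - 1)) * T := by
        linear_combination z * hTeq + 2 * hSeq
      exact mul_right_cancel₀ hT0 h
    have hfac : (z - lp) * (z - lm) = 0 := by
      rw [← hquad]; linear_combination key
    rcases mul_eq_zero.mp hfac with h | h
    · rw [sub_eq_zero] at h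
      rw [h, Complex.norm_real, Real.norm_eq_abs, abs_of_nonneg hlppos.le]
    · rw [sub_eq_zero] at h
      rw [h, Complex.norm_real, Real.norm_eq_abs]
      have : |lm| = -lm := abs_of_nonpos (by rw [hlm]; linarith)
      rw [this, hlm, hlp]; linarith
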